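/- Let a > 0 and let δ̂ : ℝ → ℝ be convex and strictly increasing on [0,∞). Then the function h : ℝ → ℝ defined by h(ξ) = δ̂(√(a² + ξ²)) is strictly convex on ℝ. -/

import Mathlib

open Complex in
private lemma norm_aux (a x : ℝ) :
    Real.sqrt (a ^ 2 + x ^ 2) = ‖(a + x * I : ℂ)‖ := by
  rw [Complex.norm_add_mul_I]

/-- If `δ̂` is convex and strictly increasing on `[0,∞)` and `a > 0`, then
`ξ ↦ δ̂(√(a² + ξ²))` is strictly convex on `ℝ`. -/
theorem strictConvexOn_comp_sqrt_sq
    (a : ℝ) (ha : 0 < a) (δhat : ℝ → ℝ)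
    (hconv : ConvexOn ℝ Set.univ δhat)
    (hmono : ∀ u v : ℝ, 0 ≤ u → u < v → δhat u < δhat v) :
    StrictConvexOn ℝ Set.univ (fun ξ : ℝ => δhat (Real.sqrt (a ^ 2 + ξ ^ 2))) := by
  constructor
  · exact convex_univ
  · intro x _ y _ hxy p q hp hq hpq
    set u : ℂ := a + x * Complex.I with hu
    set v : ℂ := a + y * Complex.I with hv
    have hune : u ≠ 0 := by
      intro h
      have := congrArg Complex.re h
      simp [hu] at this
      exact ha.ne' this
    have hvne : v ≠ 0 := by
      intro h
      have := congrArg Complex.re h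
      simp [hv] at this
      exact ha.ne' this
    have hnotray : ¬ SameRay ℝ (p • u) (q • v) := by
      intro hray
      have hpu : p • u ≠ 0 := smul_ne_zero hp.ne' hune
      have hqv : q • v ≠ 0 := smul_ne_zero hq.ne' hvne
      obtain ⟨r₁, r₂, hr₁, hr₂, hruv⟩ := hray.exists_pos hpu hqv
      have hre := congrArg Complex.re hruv
      have him := congrArg Complex.im hruv
      simp [hu, hv, Complex.smul_re, Complex.smul_im] at hre him
      have hco : r₁ * p = r₂ * q := by
        have h' : (r₁ * p) * a = (r₂ * q) * a := by ring_nf; ring_nf at hre; linarith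
        exact mul_right_cancel₀ ha.ne' h'
      rw [← mul_assoc, ← mul_assoc, hco] at him
      have : x = y := mul_left_cancel₀ (by positivity) him
      exact hxy this
    have hlt : Real.sqrt (a ^ 2 + (p * x + q * y) ^ 2)
        < p * Real.sqrt (a ^ 2 + x ^ 2) + q * Real.sqrt (a ^ 2 + y ^ 2) := by
      rw [norm_aux, norm_aux, norm_aux]
      have h1 : (↑a + ↑(p * x + q * y) * Complex.I : ℂ) = p • u + q • v := by
        simp only [hu, hv, Complex.ext_iff, Complex.add_re, Complex.add_im,
          Complex.smul_re, Complex.smul_im, Complex.ofReal_re, Complex.ofReal_im,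
          Complex.mul_re, Complex.mul_im, Complex.I_re, Complex.I_im, smul_eq_mul]
        constructor <;> nlinarith [hpq]
      rw [h1]
      calc ‖p • u + q • v‖ < ‖p • u‖ + ‖q • v‖ := norm_add_lt_of_not_sameRay hnotray
        _ = p * ‖u‖ + q * ‖v‖ := by
            rw [norm_smul, norm_smul, Real.norm_of_nonneg hp.le, Real.norm_of_nonneg hq.le]
    calc δhat (Real.sqrt (a ^ 2 + (p * x + q * y) ^ 2))
        < δhat (p * Real.sqrt (a ^ 2 + x ^ 2) + q * Real.sqrt (a ^ 2 + y ^ 2)) :=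
          hmono _ _ (Real.sqrt_nonneg _) hlt
      _ ≤ p * δhat (Real.sqrt (a ^ 2 + x ^ 2)) + q * δhat (Real.sqrt (a ^ 2 + y ^ 2)) :=
          hconv.2 (Set.mem_univ _) (Set.mem_univ _) hp.le hq.le hpq
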